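/- Fix p ∈ (0,1) and an integer r ≥ 0, and let a = −1/log(1−p). For the (fixed) geometric distribution with pmf p_ℓ = p(1−p)^{ℓ−1}, ℓ = 1, 2, …, the quantity s²_{r,n} satisfies: 2·max{0, a(r+1) − (r+1)^{r+1}e^{−(r+1)} − (r+2)^{r+2}e^{−(r+2)}} ≤ liminf_{n→∞} s²_{r,n} ≤ limsup_{n→∞} s²_{r,n} ≤ 2a(r+1) + 2(r+1)^{r+1}e^{−(r+1)} + 2(r+2)^{r+2}e^{−(r+2)}. -/

import Mathlib

open MeasureTheory ProbabilityTheory Filter Topology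
open scoped NNReal

noncomputable section

/-- pmf of the dynamic geometric distribution with parameter `a`:
`p_ℓ = (e^{1/a} - 1) e^{-ℓ/a}` for `ℓ = 1, 2, …` (letter `0` is not used). -/
def geomPMF (a : ℝ) (ℓ : ℕ) : ℝ :=
  if ℓ = 0 then 0 else (Real.exp (1 / a) - 1) * Real.exp (-(ℓ : ℝ) / a)

/-- pmf of the fixed geometric distribution: `p_ℓ = p (1-p)^{ℓ-1}` for `ℓ = 1, 2, …`. -/
def fixedGeomPMF (p : ℝ) (ℓ : ℕ) : ℝ :=
  if ℓ = 0 then 0 else p * (1 - p) ^ (ℓ - 1)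

/-- pmf of the dynamic discrete uniform distribution with parameter `γ` and sample size `n`:
`p_ℓ^{(n)} = 1/⌊n^γ⌋` for `ℓ = 1, …, ⌊n^γ⌋`. -/
def unifPMF (γ : ℝ) (n : ℕ) (ℓ : ℕ) : ℝ :=
  if 1 ≤ ℓ ∧ ℓ ≤ ⌊(n : ℝ) ^ γ⌋₊ then (⌊(n : ℝ) ^ γ⌋₊ : ℝ)⁻¹ else 0

/-- pmf of the fixed discrete uniform distribution on `{1, …, K}`. -/
def fixedUnifPMF (K : ℕ) (ℓ : ℕ) : ℝ :=
  if 1 ≤ ℓ ∧ ℓ ≤ K then (K : ℝ)⁻¹ else 0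

/-- `y_{ℓ,n}`: the number of times letter `ℓ` appears in the sample `ω`. -/
def occ {n : ℕ} (ω : Fin n → ℕ) (ℓ : ℕ) : ℕ :=
  (Finset.univ.filter fun i => ω i = ℓ).card

/-- `N_{r,n}`: the number of letters appearing exactly `r` times in `ω` (valid for `r ≥ 1`). -/
def Ncount {n : ℕ} (ω : Fin n → ℕ) (r : ℕ) : ℕ :=
  ((Finset.univ.image ω).filter fun ℓ => occ ω ℓ = r).card

/-- `π_{r,n}`: the `r`-th occupancy probability. -/
def occProb {n : ℕ} (p : ℕ → ℝ) (ω : Fin n → ℕ) (r : ℕ) : ℝ :=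
  ∑' ℓ : ℕ, p ℓ * (if occ ω ℓ = r then 1 else 0)

/-- `T_{r,n}`: Turing's estimator. -/
def turing {n : ℕ} (ω : Fin n → ℕ) (r : ℕ) : ℝ :=
  ((r : ℝ) + 1) * (Ncount ω (r + 1) : ℝ) / (n : ℝ)

/-- `ŝ_{r,n} = sqrt((r+1)² N_{r+1,n} + (r+2)(r+1) N_{r+2,n})`. -/
def shat {n : ℕ} (ω : Fin n → ℕ) (r : ℕ) : ℝ :=
  Real.sqrt (((r : ℝ) + 1) ^ 2 * (Ncount ω (r + 1) : ℝ) +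
    ((r : ℝ) + 2) * ((r : ℝ) + 1) * (Ncount ω (r + 2) : ℝ))

/-- the joint pmf of an i.i.d. sample of size `n` from the pmf `p`. -/
def jointPMF {n : ℕ} (p : ℕ → ℝ) (ω : Fin n → ℕ) : ℝ := ∏ i, p (ω i)

/-- the normalized statistic `(n/ŝ_{r,n})(T_{r,n} - π_{r,n})`, interpreted as `0`
when `ŝ_{r,n} = 0` (which is automatic from Lean's convention `x / 0 = 0`). -/
def normStat {n : ℕ} (p : ℕ → ℝ) (ω : Fin n → ℕ) (r : ℕ) : ℝ :=
  (n : ℝ) / shat ω r * (turing ω r - occProb p ω r)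

open scoped Classical in
/-- the statistic `T_{r,n} (n/ŝ_{r,n}) (T_{r,n}/π_{r,n} - 1)`, interpreted as `0` on the
event where `ŝ_{r,n} = 0` or `π_{r,n} = 0`. -/
def ratioStat {n : ℕ} (p : ℕ → ℝ) (ω : Fin n → ℕ) (r : ℕ) : ℝ :=
  if shat ω r = 0 ∨ occProb p ω r = 0 then 0
  else turing ω r * ((n : ℝ) / shat ω r) * (turing ω r / occProb p ω r - 1)

/-- `s²_{r,n} = Σ_ℓ (r+1+n p_ℓ) e^{-n p_ℓ} (n p_ℓ)^{r+1} / r!`. -/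
def s2 (p : ℕ → ℝ) (r n : ℕ) : ℝ :=
  ∑' ℓ : ℕ, ((r : ℝ) + 1 + (n : ℝ) * p ℓ) * Real.exp (-((n : ℝ) * p ℓ)) *
    ((n : ℝ) * p ℓ) ^ (r + 1) / (r.factorial : ℝ)

/-- `h_{n,η}(x) = e^{-n f_n(x)} (n f_n(x))^η` where `f_n(x) = (e^{1/a_n} - 1) e^{-x/a_n}`. -/
def hfun (a : ℝ) (n : ℕ) (η : ℝ) (x : ℝ) : ℝ :=
  Real.exp (-((n : ℝ) * ((Real.exp (1 / a) - 1) * Real.exp (-x / a)))) *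
    ((n : ℝ) * ((Real.exp (1 / a) - 1) * Real.exp (-x / a))) ^ η

namespace S2Aux
open Set Real

def G (k : ℕ) (u : ℝ) : ℝ := Real.exp (-u) * u ^ k

lemma G_cont (k : ℕ) : Continuous (G k) := by
  unfold G; continuity

lemma G_nonneg (k : ℕ) {u : ℝ} (hu : 0 ≤ u) : 0 ≤ G k u := by
  unfold G; positivity

lemma G_max (k : ℕ) {u : ℝ} (hu : 0 ≤ u) : G k u ≤ (k : ℝ) ^ k * Real.exp (-(k : ℝ)) := by
  rcases eq_or_lt_of_le hu with h | h
  · rcases Nat.eq_zero_or_pos k with hk | hk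
    · subst hk; simp [G, ← h]
    · have h0 : (0:ℝ) ^ k = 0 := zero_pow (by omega)
      rw [G, ← h, h0, mul_zero]
      positivity
  · rcases Nat.eq_zero_or_pos k with hk | hk
    · subst hk
      simp only [G, pow_zero, mul_one, Nat.cast_zero, neg_zero, Real.exp_zero, one_mul]
      calc Real.exp (-u) ≤ Real.exp 0 := Real.exp_le_exp.mpr (by linarith)
        _ = 1 := Real.exp_zero
    · have hk' : (0:ℝ) < k := by exact_mod_cast hk
      have h1 : Real.log (u / k) ≤ u / k - 1 := Real.log_le_sub_one_of_pos (by positivity)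
      have h2 : Real.log (u / k) = Real.log u - Real.log k := Real.log_div (ne_of_gt h) (ne_of_gt hk')
      have h3 : (k:ℝ) * Real.log u - u ≤ (k:ℝ) * Real.log k - k := by
        have := mul_le_mul_of_nonneg_left h1 (le_of_lt hk')
        rw [h2] at this
        have hdiv : (k:ℝ) * (u / k - 1) = u - k := by field_simp
        nlinarith
      have hu' : u ^ k = Real.exp ((k:ℝ) * Real.log u) := by
        rw [← Real.exp_log h, ← Real.exp_nat_mul, Real.exp_log h]
      have hkk : (k:ℝ) ^ k = Real.exp ((k:ℝ) * Real.log k) := by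
        rw [← Real.exp_log hk', ← Real.exp_nat_mul, Real.exp_log hk']
      rw [G, hu', hkk, ← Real.exp_add, ← Real.exp_add]
      exact Real.exp_le_exp.mpr (by linarith)

lemma G_hasDeriv (k : ℕ) (u : ℝ) :
    HasDerivAt (G k) (Real.exp (-u) * ((k:ℝ) * u ^ (k-1)) - Real.exp (-u) * u ^ k) u := by
  have h1 : HasDerivAt (fun u : ℝ => Real.exp (-u)) (-Real.exp (-u)) u := by
    simpa using (hasDerivAt_neg u).exp
  have h2 := h1.mul (hasDerivAt_pow k u)
  have hG : G k = fun u => Real.exp (-u) * u ^ k := rfl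
  rw [hG]
  exact h2.congr_deriv (by ring)

lemma G_mono (k : ℕ) : MonotoneOn (G k) (Icc 0 (k:ℝ)) := by
  apply monotoneOn_of_deriv_nonneg (convex_Icc _ _) (G_cont k).continuousOn
  · exact fun x _ => ((G_hasDeriv k x).differentiableAt).differentiableWithinAt
  · intro x hx
    rw [interior_Icc] at hx
    rw [(G_hasDeriv k x).deriv]
    rcases Nat.eq_zero_or_pos k with hk | hk
    · subst hk; simp at hx
    · obtain ⟨j, rfl⟩ : ∃ j, k = j + 1 := ⟨k - 1, by omega⟩
      have hx1 : 0 < x := hx.1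
      have hx2 : x < (j:ℝ) + 1 := by exact_mod_cast hx.2
      have hxp : (0:ℝ) ≤ x ^ j := by positivity
      have hps : x ^ (j+1) = x ^ j * x := pow_succ x j
      have hexp : (0:ℝ) < Real.exp (-x) := Real.exp_pos _
      simp only [Nat.add_sub_cancel]
      have h4 : x ^ j * x ≤ x ^ j * ((j:ℝ)+1) := mul_le_mul_of_nonneg_left (le_of_lt hx2) hxp
      have h5 : Real.exp (-x) * (x ^ j * x) ≤ Real.exp (-x) * (x ^ j * ((j:ℝ)+1)) :=
        mul_le_mul_of_nonneg_left h4 (le_of_lt hexp)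
      push_cast
      nlinarith [h5]

lemma G_anti (k : ℕ) : AntitoneOn (G k) (Ici (k:ℝ)) := by
  apply antitoneOn_of_deriv_nonpos (convex_Ici _) (G_cont k).continuousOn
  · exact fun x _ => ((G_hasDeriv k x).differentiableAt).differentiableWithinAt
  · intro x hx
    rw [interior_Ici] at hx
    rw [(G_hasDeriv k x).deriv]
    have hx0 : (0:ℝ) < x := lt_of_le_of_lt (Nat.cast_nonneg k) hx
    rcases Nat.eq_zero_or_pos k with hk | hk
    · subst hk
      simp only [Nat.cast_zero, pow_zero, Nat.zero_sub, zero_mul, mul_zero, mul_one]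
      linarith [Real.exp_pos (-x)]
    · obtain ⟨j, rfl⟩ : ∃ j, k = j + 1 := ⟨k - 1, by omega⟩
      have hx2 : (j:ℝ) + 1 < x := by exact_mod_cast hx
      have hxp : (0:ℝ) ≤ x ^ j := by positivity
      have hps : x ^ (j+1) = x ^ j * x := pow_succ x j
      have hexp : (0:ℝ) < Real.exp (-x) := Real.exp_pos _
      simp only [Nat.add_sub_cancel]
      have h4 : x ^ j * ((j:ℝ)+1) ≤ x ^ j * x := mul_le_mul_of_nonneg_left (le_of_lt hx2) hxp
      have h5 : Real.exp (-x) * (x ^ j * ((j:ℝ)+1)) ≤ Real.exp (-x) * (x ^ j * x) :=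
        mul_le_mul_of_nonneg_left h4 (le_of_lt hexp)
      push_cast
      nlinarith [h5]

lemma G_integrableOn (m : ℕ) : IntegrableOn (G m) (Ioi (0:ℝ)) := by
  have h := Real.GammaIntegral_convergent (s := (m:ℝ) + 1) (by positivity)
  apply h.congr_fun _ measurableSet_Ioi
  intro x hx
  simp only [add_sub_cancel_right]
  rw [Real.rpow_natCast]
  rfl

lemma G_integral (m : ℕ) : ∫ u in Ioi (0:ℝ), G m u = (m.factorial : ℝ) := by
  have h := Real.Gamma_eq_integral (s := (m:ℝ) + 1) (by positivity)
  have h2 : Real.Gamma ((m:ℝ) + 1) = (m.factorial : ℝ) := Real.Gamma_nat_eq_factorial m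
  rw [← h2, h]
  apply setIntegral_congr_fun measurableSet_Ioi
  intro x hx
  simp only [add_sub_cancel_right]
  rw [Real.rpow_natCast]
  rfl

lemma G_intervalIntegral_le (m : ℕ) {a b : ℝ} (ha : 0 ≤ a) (hab : a ≤ b) :
    (∫ u in a..b, G m u) ≤ (m.factorial : ℝ) := by
  rw [intervalIntegral.integral_of_le hab, ← G_integral m]
  apply setIntegral_mono_set (G_integrableOn m)
  · filter_upwards [ae_restrict_mem measurableSet_Ioi] with x hx
    exact G_nonneg m (le_of_lt hx)
  · exact HasSubset.Subset.eventuallyLE (fun x hx => lt_of_le_of_lt ha hx.1)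


/-- the max of `G (m+1)`. -/
def Mb (m : ℕ) : ℝ := ((m:ℝ)+1) ^ (m+1) * Real.exp (-((m:ℝ)+1))

lemma Mb_nonneg (m : ℕ) : 0 ≤ Mb m := by unfold Mb; positivity

/-- `g(t) = G (m+1) (x e^{-Lt})`. -/
def gg (m : ℕ) (L x t : ℝ) : ℝ := G (m+1) (x * Real.exp (-(L*t)))

lemma G_succ (m : ℕ) (v : ℝ) : G (m+1) v = v * G m v := by
  simp only [G, pow_succ]; ring

/-- the time at which `x e^{-Lt}` passes the peak `m+1`. -/
def tstar (m : ℕ) (L x : ℝ) : ℝ := Real.log (x / ((m:ℝ)+1)) / L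

lemma c_pos {m : ℕ} {L x : ℝ} (hx : (m:ℝ) + 1 < x) (t : ℝ) :
    0 < x * Real.exp (-(L*t)) := by
  have hx0 : (0:ℝ) < x := lt_trans (by positivity) hx
  positivity

lemma gg_cont (m : ℕ) (L x : ℝ) : Continuous (gg m L x) := by
  unfold gg; exact (G_cont (m+1)).comp (by continuity)

lemma gg_nonneg {m : ℕ} {L x : ℝ} (hx : (m:ℝ) + 1 < x) (t : ℝ) : 0 ≤ gg m L x t :=
  G_nonneg _ (le_of_lt (c_pos hx t))

lemma gg_le {m : ℕ} {L x : ℝ} (hx : (m:ℝ) + 1 < x) (t : ℝ) : gg m L x t ≤ Mb m := by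
  have h := G_max (m+1) (u := x * Real.exp (-(L*t))) (le_of_lt (c_pos hx t))
  unfold gg Mb
  convert h using 2 <;> push_cast <;> ring

lemma tstar_pos {m : ℕ} {L x : ℝ} (hL : 0 < L) (hx : (m:ℝ) + 1 < x) :
    0 < tstar m L x := by
  apply div_pos _ hL
  apply Real.log_pos
  rw [lt_div_iff₀ (by positivity)]
  linarith

lemma c_tstar {m : ℕ} {L x : ℝ} (hL : 0 < L) (hx : (m:ℝ) + 1 < x) :
    x * Real.exp (-(L * tstar m L x)) = (m:ℝ) + 1 := by
  have hm1 : (0:ℝ) < (m:ℝ) + 1 := by positivity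
  have hx0 : (0:ℝ) < x := lt_trans (by positivity) hx
  have hd : (0:ℝ) < x / ((m:ℝ)+1) := div_pos hx0 hm1
  rw [tstar, mul_div_assoc', mul_comm L, mul_div_assoc, div_self (ne_of_gt hL), mul_one,
    Real.exp_neg, Real.exp_log hd, inv_div]
  field_simp

lemma c_anti {m : ℕ} {L x : ℝ} (hL : 0 < L) (hx : (m:ℝ) + 1 < x) {s t : ℝ} (hst : s ≤ t) :
    x * Real.exp (-(L*t)) ≤ x * Real.exp (-(L*s)) := by
  have hx0 : (0:ℝ) < x := lt_trans (by positivity) hx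
  apply mul_le_mul_of_nonneg_left _ (le_of_lt hx0)
  exact Real.exp_le_exp.mpr (by nlinarith)

lemma gg_mono {m : ℕ} {L x : ℝ} (hL : 0 < L) (hx : (m:ℝ) + 1 < x) :
    MonotoneOn (gg m L x) (Icc 0 (tstar m L x)) := by
  intro s hs t ht hst
  have hcs : (m:ℝ)+1 ≤ x * Real.exp (-(L*s)) := by
    rw [← c_tstar hL hx]; exact c_anti hL hx hs.2
  have hct : (m:ℝ)+1 ≤ x * Real.exp (-(L*t)) := by
    rw [← c_tstar hL hx]; exact c_anti hL hx ht.2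
  have hle := c_anti hL hx hst
  have hcast : ((m+1 : ℕ):ℝ) = (m:ℝ)+1 := by push_cast; ring
  have h2 := G_anti (m+1) (a := x * Real.exp (-(L*t))) (b := x * Real.exp (-(L*s)))
    (by rw [mem_Ici, hcast]; exact hct) (by rw [mem_Ici, hcast]; exact hcs) hle
  simpa [gg] using h2

lemma gg_anti {m : ℕ} {L x : ℝ} (hL : 0 < L) (hx : (m:ℝ) + 1 < x) :
    AntitoneOn (gg m L x) (Ici (tstar m L x)) := by
  intro s hs t ht hst
  have hcs : x * Real.exp (-(L*s)) ≤ (m:ℝ)+1 := by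
    rw [← c_tstar hL hx]; exact c_anti hL hx hs
  have hct : x * Real.exp (-(L*t)) ≤ (m:ℝ)+1 := by
    rw [← c_tstar hL hx]; exact c_anti hL hx ht
  have hle := c_anti hL hx hst
  have hcast : ((m+1 : ℕ):ℝ) = (m:ℝ)+1 := by push_cast; ring
  have h2 := G_mono (m+1) (a := x * Real.exp (-(L*t))) (b := x * Real.exp (-(L*s)))
    (⟨le_of_lt (c_pos hx t), by rw [hcast]; exact hct⟩)
    (⟨le_of_lt (c_pos hx s), by rw [hcast]; exact hcs⟩) hle
  simpa [gg] using h2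

lemma c_hasDeriv {L x : ℝ} (t : ℝ) :
    HasDerivAt (fun t => x * Real.exp (-(L*t))) (-(L * (x * Real.exp (-(L*t))))) t := by
  have h1 : HasDerivAt (fun t : ℝ => -(L*t)) (-L) t := by
    exact ((hasDerivAt_id t).const_mul L).neg.congr_deriv (by simp)
  have h2 := (h1.exp).const_mul x
  exact h2.congr_deriv (by ring)

lemma gg_integral {m : ℕ} {L x : ℝ} (hL : 0 < L) (T : ℝ) :
    ∫ t in (0:ℝ)..T, gg m L x t
      = (1/L) * ∫ u in (x * Real.exp (-(L*T)))..x, G m u := by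
  have hsub := intervalIntegral.integral_comp_smul_deriv (a := (0:ℝ)) (b := T)
    (f := fun t => x * Real.exp (-(L*t))) (f' := fun t => -(L * (x * Real.exp (-(L*t)))))
    (g := G m) (fun t _ => c_hasDeriv t) (by fun_prop) (G_cont m)
  have hint : ∀ t : ℝ, (-(L * (x * Real.exp (-(L*t))))) • (G m ∘ (fun t => x * Real.exp (-(L*t)))) t
      = -L * gg m L x t := by
    intro t
    simp only [Function.comp, smul_eq_mul, gg, G_succ]
    ring
  simp only [hint] at hsub
  rw [intervalIntegral.integral_const_mul] at hsub
  have h0 : x * Real.exp (-(L*0)) = x := by simp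
  rw [h0] at hsub
  rw [intervalIntegral.integral_symm x (x * Real.exp (-(L*T))), ← hsub]
  field_simp


lemma summable_gg {m : ℕ} {L x : ℝ} (hL : 0 < L) (hx : (m:ℝ) + 1 < x) :
    Summable (fun j : ℕ => gg m L x j) := by
  have hx0 : (0:ℝ) < x := lt_trans (by positivity) hx
  have hq1 : Real.exp (-L) < 1 := Real.exp_lt_one_iff.mpr (by linarith)
  have hq0 : 0 ≤ Real.exp (-L) := le_of_lt (Real.exp_pos _)
  have hρ0 : 0 ≤ Real.exp (-L) ^ (m+1) := by positivity
  have hρ1 : Real.exp (-L) ^ (m+1) < 1 := pow_lt_one₀ hq0 hq1 (by omega)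
  refine Summable.of_nonneg_of_le (fun j => gg_nonneg hx j) (fun j => ?_)
    ((summable_geometric_of_lt_one hρ0 hρ1).mul_left (x ^ (m+1)))
  have hcj : 0 < x * Real.exp (-(L*(j:ℝ))) := c_pos hx _
  have h1 : gg m L x j ≤ (x * Real.exp (-(L*(j:ℝ)))) ^ (m+1) := by
    unfold gg G
    have : Real.exp (-(x * Real.exp (-(L*(j:ℝ))))) ≤ 1 :=
      Real.exp_le_one_iff.mpr (by linarith)
    nlinarith [pow_pos hcj (m+1)]
  refine h1.trans (le_of_eq ?_)
  rw [mul_pow]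
  congr 1
  rw [← Real.exp_nat_mul, ← Real.exp_nat_mul, ← Real.exp_nat_mul]
  congr 1
  push_cast
  ring

lemma gg_sum_upper {m : ℕ} {L x : ℝ} (hL : 0 < L) (hx : (m:ℝ) + 1 < x) :
    ∑' j : ℕ, gg m L x (j:ℝ) ≤ (m.factorial : ℝ)/L + Mb m := by
  set k := ⌊tstar m L x⌋₊ with hk
  have ht0 : 0 ≤ tstar m L x := le_of_lt (tstar_pos hL hx)
  have hk1 : (k:ℝ) ≤ tstar m L x := Nat.floor_le ht0
  have hk2 : tstar m L x < (k:ℝ) + 1 := Nat.lt_floor_add_one _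
  have hii : ∀ a b : ℝ, IntervalIntegrable (gg m L x) volume a b :=
    fun a b => (gg_cont m L x).intervalIntegrable a b
  apply tsum_le_of_sum_range_le (fun n => gg_nonneg hx n)
  intro N
  -- enlarge N to k + 2 + j
  have hmax : N ≤ max N (k+2) := le_max_left _ _
  obtain ⟨j, hj⟩ : ∃ j, max N (k+2) = (k+2)+j := ⟨max N (k+2) - (k+2), by omega⟩
  have henl : ∑ i ∈ Finset.range N, gg m L x i ≤ ∑ i ∈ Finset.range ((k+2)+j), gg m L x i := by
    rw [← hj]
    exact Finset.sum_le_sum_of_subset_of_nonneg (Finset.range_subset_range.mpr hmax)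
      (fun i _ _ => gg_nonneg hx i)
  refine henl.trans ?_
  -- decompose
  rw [Finset.sum_range_add, Finset.sum_range_succ, Finset.sum_range_succ]
  -- A : increasing part
  have hA : ∑ i ∈ Finset.range k, gg m L x i ≤ ∫ t in (0:ℝ)..(k:ℕ), gg m L x t := by
    have hmono : MonotoneOn (gg m L x) (Icc (0:ℝ) (0 + (k:ℕ))) := by
      apply (gg_mono hL hx).mono
      apply Icc_subset_Icc le_rfl
      simpa using hk1
    have := hmono.sum_le_integral
    simpa using this
  -- B : peak
  have hB : gg m L x k + gg m L x (k+1:ℕ) ≤ Mb m + ∫ t in (k:ℝ)..((k:ℝ)+1), gg m L x t := by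
    have hmin : ∀ t ∈ Icc (k:ℝ) ((k:ℝ)+1),
        min (gg m L x k) (gg m L x ((k:ℝ)+1)) ≤ gg m L x t := by
      intro t ht
      rcases le_total t (tstar m L x) with h | h
      · refine le_trans (min_le_left _ _) ?_
        exact gg_mono hL hx ⟨by positivity, hk1⟩ ⟨le_trans (by positivity) ht.1, h⟩ ht.1
      · refine le_trans (min_le_right _ _) ?_
        exact gg_anti hL hx h (le_of_lt hk2) ht.2
    have hint : min (gg m L x k) (gg m L x ((k:ℝ)+1)) ≤ ∫ t in (k:ℝ)..((k:ℝ)+1), gg m L x t := by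
      have h1 := intervalIntegral.integral_mono_on (by linarith : (k:ℝ) ≤ (k:ℝ)+1)
        (intervalIntegrable_const) (hii _ _) hmin
      simpa using h1
    have hmax2 : max (gg m L x k) (gg m L x ((k:ℝ)+1)) ≤ Mb m :=
      max_le (gg_le hx _) (gg_le hx _)
    have hmm := max_add_min (gg m L x k) (gg m L x ((k:ℝ)+1))
    have hcast : ((k+1:ℕ):ℝ) = (k:ℝ)+1 := by push_cast; ring
    rw [hcast]
    linarith
  -- C : decreasing tail
  have hC : ∑ i ∈ Finset.range j, gg m L x ((k+2)+i:ℕ)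
      ≤ ∫ t in ((k:ℝ)+1)..(((k:ℝ)+1)+(j:ℕ)), gg m L x t := by
    have hanti : AntitoneOn (gg m L x) (Icc ((k:ℝ)+1) (((k:ℝ)+1) + (j:ℕ))) := by
      apply (gg_anti hL hx).mono
      intro t ht
      exact le_trans (le_of_lt hk2) ht.1
    have := hanti.sum_le_integral
    refine le_trans (le_of_eq ?_) this
    apply Finset.sum_congr rfl
    intro i _
    congr 1
    push_cast
    ring
  -- D : integrals add up
  have hD : (∫ t in (0:ℝ)..(k:ℕ), gg m L x t) + (∫ t in (k:ℝ)..((k:ℝ)+1), gg m L x t)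
      + (∫ t in ((k:ℝ)+1)..(((k:ℝ)+1)+(j:ℕ)), gg m L x t)
      = ∫ t in (0:ℝ)..(((k:ℝ)+1)+(j:ℕ)), gg m L x t := by
    rw [intervalIntegral.integral_add_adjacent_intervals (hii 0 (k:ℕ)) (hii _ _)]
    · exact intervalIntegral.integral_add_adjacent_intervals (hii 0 _) (hii _ _)
  -- E : total integral bounded
  have hE : ∫ t in (0:ℝ)..(((k:ℝ)+1)+(j:ℕ)), gg m L x t ≤ (m.factorial : ℝ)/L := by
    set T : ℝ := ((k:ℝ)+1)+(j:ℕ) with hT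
    have hT0 : (0:ℝ) ≤ T := by positivity
    rw [gg_integral hL T]
    have hcT : 0 < x * Real.exp (-(L*T)) := c_pos hx T
    have hcTx : x * Real.exp (-(L*T)) ≤ x := by
      have := c_anti hL hx hT0
      simpa using this
    have h6 := G_intervalIntegral_le m (le_of_lt hcT) hcTx
    calc (1/L) * ∫ u in (x * Real.exp (-(L*T)))..x, G m u
        ≤ (1/L) * (m.factorial : ℝ) := mul_le_mul_of_nonneg_left h6 (by positivity)
      _ = (m.factorial : ℝ)/L := by ring
  linarith

lemma Cm_pos (m : ℕ) : 0 < (m:ℝ) ^ m * Real.exp (-(m:ℝ)) := by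
  rcases Nat.eq_zero_or_pos m with hm | hm
  · subst hm; simp
  · have : (0:ℝ) < (m:ℝ) := by exact_mod_cast hm
    positivity

lemma gg_sum_lower {m : ℕ} {L x : ℝ} (hL : 0 < L) (hx : (m:ℝ) + 1 < x) :
    (1/L) * (∫ u in (0:ℝ)..x, G m u) - Mb m ≤ ∑' j : ℕ, gg m L x (j:ℝ) := by
  have hx0 : (0:ℝ) < x := lt_trans (by positivity) hx
  set k := ⌊tstar m L x⌋₊ with hk
  have ht0 : 0 ≤ tstar m L x := le_of_lt (tstar_pos hL hx)
  have hk1 : (k:ℝ) ≤ tstar m L x := Nat.floor_le ht0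
  have hk2 : tstar m L x < (k:ℝ) + 1 := Nat.lt_floor_add_one _
  have hii : ∀ a b : ℝ, IntervalIntegrable (gg m L x) volume a b :=
    fun a b => (gg_cont m L x).intervalIntegrable a b
  have hiiG : ∀ a b : ℝ, IntervalIntegrable (G m) volume a b :=
    fun a b => (G_cont m).intervalIntegrable a b
  set Cm := (m:ℝ) ^ m * Real.exp (-(m:ℝ)) with hCm
  have hCm0 : 0 < Cm := Cm_pos m
  apply le_of_forall_pos_le_add
  intro ε hε
  -- choose N
  have hδ : 0 < ε * L / Cm := by positivity
  have hten : Tendsto (fun n : ℕ => x * Real.exp (-(L*(n:ℝ)))) atTop (𝓝 0) := by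
    have h1 : Tendsto (fun n : ℕ => L * (n:ℝ)) atTop atTop :=
      (tendsto_natCast_atTop_atTop).const_mul_atTop hL
    have h2 := (Real.tendsto_exp_neg_atTop_nhds_zero).comp h1
    have h3 := h2.const_mul x
    simpa [Function.comp] using h3
  obtain ⟨N, hN1, hN2⟩ := ((hten.eventually (gt_mem_nhds hδ)).and
    (eventually_ge_atTop (k+1))).exists
  obtain ⟨j, hj⟩ : ∃ j, N = (k+1)+j := ⟨N - (k+1), by omega⟩
  -- partial sum ≤ tsum
  have hpart : ∑ i ∈ Finset.range N, gg m L x i ≤ ∑' j : ℕ, gg m L x (j:ℝ) :=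
    Summable.sum_le_tsum _ (fun i _ => gg_nonneg hx i) (summable_gg hL hx)
  -- partial sum ≥ ∫_0^N g − Mb
  have hlow : (∫ t in (0:ℝ)..(N:ℝ), gg m L x t) - Mb m
      ≤ ∑ i ∈ Finset.range N, gg m L x i := by
    subst hj
    rw [Finset.sum_range_add]
    -- increasing part
    have hA : (∫ t in (0:ℝ)..(k:ℕ), gg m L x t) ≤ ∑ i ∈ Finset.range (k+1), gg m L x i := by
      have hmono : MonotoneOn (gg m L x) (Icc (0:ℝ) (0 + (k:ℕ))) := by
        apply (gg_mono hL hx).mono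
        apply Icc_subset_Icc le_rfl
        simpa using hk1
      have h2 := hmono.integral_le_sum
      rw [Finset.sum_range_succ']
      have h3 : ∑ i ∈ Finset.range k, gg m L x (0 + (i+1:ℕ)) 
          = ∑ i ∈ Finset.range k, gg m L x (i+1:ℕ) := by
        apply Finset.sum_congr rfl; intro i _; norm_num
      rw [h3] at h2
      calc (∫ t in (0:ℝ)..(k:ℕ), gg m L x t) = ∫ t in (0:ℝ)..(0+(k:ℕ)), gg m L x t := by norm_num
        _ ≤ ∑ i ∈ Finset.range k, gg m L x (i+1:ℕ) := h2
        _ ≤ _ := le_add_of_nonneg_right (gg_nonneg hx _)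
    -- decreasing part
    have hC : (∫ t in ((k:ℝ)+1)..(((k:ℝ)+1)+(j:ℕ)), gg m L x t)
        ≤ ∑ i ∈ Finset.range j, gg m L x ((k+1)+i:ℕ) := by
      have hanti : AntitoneOn (gg m L x) (Icc ((k:ℝ)+1) (((k:ℝ)+1) + (j:ℕ))) := by
        apply (gg_anti hL hx).mono
        intro t ht
        exact le_trans (le_of_lt hk2) ht.1
      have h2 := hanti.integral_le_sum
      refine h2.trans (le_of_eq ?_)
      apply Finset.sum_congr rfl
      intro i _
      congr 1
      push_cast
      ring
    -- middle piece small
    have hMid : (∫ t in (k:ℝ)..((k:ℝ)+1), gg m L x t) ≤ Mb m := by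
      have h1 := intervalIntegral.integral_mono_on (by linarith : (k:ℝ) ≤ (k:ℝ)+1)
        (hii _ _) (intervalIntegrable_const (c := Mb m)) (fun t _ => gg_le hx t)
      simpa using h1
    -- integrals add
    have hD : (∫ t in (0:ℝ)..(k:ℕ), gg m L x t) + (∫ t in (k:ℝ)..((k:ℝ)+1), gg m L x t)
        + (∫ t in ((k:ℝ)+1)..(((k:ℝ)+1)+(j:ℕ)), gg m L x t)
        = ∫ t in (0:ℝ)..(((k:ℝ)+1)+(j:ℕ)), gg m L x t := by
      rw [intervalIntegral.integral_add_adjacent_intervals (hii 0 (k:ℕ)) (hii _ _)]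
      exact intervalIntegral.integral_add_adjacent_intervals (hii 0 _) (hii _ _)
    have hcast : ((k+1+j:ℕ):ℝ) = ((k:ℝ)+1)+(j:ℕ) := by push_cast; ring
    rw [hcast]
    linarith
  -- integral identity and error bound
  have hIeq : ∫ t in (0:ℝ)..(N:ℝ), gg m L x t
      = (1/L) * ∫ u in (x * Real.exp (-(L*(N:ℝ))))..x, G m u := gg_integral hL _
  set cN := x * Real.exp (-(L*(N:ℝ))) with hcN
  have hcN0 : 0 < cN := c_pos hx _
  have hcNx : cN ≤ x := by
    have := c_anti hL hx (by positivity : (0:ℝ) ≤ (N:ℝ))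
    simpa using this
  have hsplit : (∫ u in (0:ℝ)..cN, G m u) + (∫ u in cN..x, G m u) = ∫ u in (0:ℝ)..x, G m u :=
    intervalIntegral.integral_add_adjacent_intervals (hiiG _ _) (hiiG _ _)
  have hsmall : (∫ u in (0:ℝ)..cN, G m u) ≤ ε * L := by
    have h1 : ∀ u ∈ Icc (0:ℝ) cN, G m u ≤ Cm := by
      intro u hu
      have := G_max m hu.1
      simpa [hCm] using this
    have h2 := intervalIntegral.integral_mono_on (le_of_lt hcN0)
      (hiiG _ _) (intervalIntegrable_const (c := Cm)) h1
    simp only [intervalIntegral.integral_const, smul_eq_mul, sub_zero] at h2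
    have h3 : cN * Cm ≤ (ε * L / Cm) * Cm :=
      mul_le_mul_of_nonneg_right (le_of_lt hN1) (le_of_lt hCm0)
    have h4 : (ε * L / Cm) * Cm = ε * L := by field_simp
    linarith
  have hfinal : (1/L) * (∫ u in (0:ℝ)..x, G m u) - ε
      ≤ (1/L) * ∫ u in cN..x, G m u := by
    have h5 : (∫ u in cN..x, G m u) ≥ (∫ u in (0:ℝ)..x, G m u) - ε * L := by linarith
    have h6 := mul_le_mul_of_nonneg_left h5 (le_of_lt (one_div_pos.mpr hL))
    calc (1/L) * (∫ u in (0:ℝ)..x, G m u) - ε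
        = (1/L) * ((∫ u in (0:ℝ)..x, G m u) - ε * L) := by field_simp
      _ ≤ _ := h6
  linarith

lemma two_fact (r : ℕ) : (r:ℝ) + 1 ≤ 2 * (r.factorial : ℝ) := by
  have h : r + 1 ≤ 2 * r.factorial := by
    rcases Nat.eq_zero_or_pos r with h | h
    · subst h; simp
    · have := Nat.self_le_factorial r; omega
  exact_mod_cast h

lemma Mb_succ (r : ℕ) : Mb (r+1) = ((r:ℝ)+2)^(r+2) * Real.exp (-((r:ℝ)+2)) := by
  simp only [Mb]
  norm_num
  ring_nf

lemma s2_nonneg {p : ℝ} (hp0 : 0 ≤ p) (hp1 : p ≤ 1) (r n : ℕ) :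
    0 ≤ s2 (fixedGeomPMF p) r n := by
  unfold s2
  apply tsum_nonneg
  intro ℓ
  have hP : 0 ≤ fixedGeomPMF p ℓ := by
    unfold fixedGeomPMF
    split
    · exact le_refl 0
    · have h1 : (0:ℝ) ≤ 1 - p := by linarith
      positivity
  have h0 : 0 ≤ (n:ℝ) * fixedGeomPMF p ℓ := by positivity
  apply div_nonneg _ (Nat.cast_nonneg _)
  apply mul_nonneg (mul_nonneg (by positivity) (Real.exp_pos _).le)
  exact pow_nonneg h0 _

lemma s2_decomp {p : ℝ} (hp0 : 0 < p) (hp1 : p < 1) (r n : ℕ)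
    (hx1 : (r:ℝ) + 1 < (n:ℝ) * p) (hx2 : (r:ℝ) + 2 < (n:ℝ) * p) :
    s2 (fixedGeomPMF p) r n
      = ((r:ℝ)+1)/(r.factorial:ℝ)
          * (∑' j : ℕ, gg r (-Real.log (1-p)) ((n:ℝ)*p) (j:ℝ))
      + (1/(r.factorial:ℝ))
          * (∑' j : ℕ, gg (r+1) (-Real.log (1-p)) ((n:ℝ)*p) (j:ℝ)) := by
  have hq0 : (0:ℝ) < 1 - p := by linarith
  set L : ℝ := -Real.log (1 - p) with hLdef
  set x : ℝ := (n:ℝ) * p with hxdef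
  have hL : 0 < L := by
    have := Real.log_neg hq0 (by linarith)
    simp only [hLdef]
    linarith
  have hx2' : ((r+1:ℕ):ℝ) + 1 < x := by push_cast; linarith
  set F : ℕ → ℝ := fun ℓ => ((r : ℝ) + 1 + (n : ℝ) * fixedGeomPMF p ℓ)
      * Real.exp (-((n : ℝ) * fixedGeomPMF p ℓ))
      * ((n : ℝ) * fixedGeomPMF p ℓ) ^ (r + 1) / (r.factorial : ℝ) with hFdef
  have hrfl : s2 (fixedGeomPMF p) r n = ∑' ℓ : ℕ, F ℓ := rfl
  have hfac : (r.factorial : ℝ) ≠ 0 := Nat.cast_ne_zero.mpr r.factorial_ne_zero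
  have hF0 : F 0 = 0 := by
    simp [hFdef, fixedGeomPMF]
  have hy : ∀ j : ℕ, x * Real.exp (-(L*(j:ℝ))) = (n:ℝ) * fixedGeomPMF p (j+1) := by
    intro j
    have h1 : Real.exp (-(L*(j:ℝ))) = (1-p)^j := by
      rw [show -(L*(j:ℝ)) = (j:ℝ) * Real.log (1-p) by simp only [hLdef]; ring,
        Real.exp_nat_mul, Real.exp_log hq0]
    rw [h1]
    simp only [fixedGeomPMF, Nat.succ_ne_zero, if_false, Nat.succ_sub_one, hxdef]
    ring
  have hFsucc : ∀ j : ℕ, F (j+1)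
      = ((r:ℝ)+1)/(r.factorial:ℝ) * gg r L x (j:ℝ)
        + (1/(r.factorial:ℝ)) * gg (r+1) L x (j:ℝ) := by
    intro j
    simp only [hFdef, gg, G, ← hy j]
    set y : ℝ := x * Real.exp (-(L*(j:ℝ))) with hydef
    field_simp
    ring
  have hs1 : Summable (fun j : ℕ => gg r L x (j:ℝ)) := summable_gg hL hx1
  have hs2 : Summable (fun j : ℕ => gg (r+1) L x (j:ℝ)) := summable_gg hL hx2'
  have hsF1 : Summable (fun j : ℕ => F (j+1)) :=
    (((hs1.mul_left _).add (hs2.mul_left _)).congr (fun j => (hFsucc j).symm))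
  have hsF : Summable F := (summable_nat_add_iff 1).mp hsF1
  rw [hrfl, Summable.tsum_eq_zero_add hsF, hF0, zero_add, tsum_congr hFsucc,
    Summable.tsum_add (hs1.mul_left _) (hs2.mul_left _), tsum_mul_left, tsum_mul_left]


end S2Aux

/-- bounds on `liminf`/`limsup` of `s²_{r,n}` for the fixed geometric
distribution with parameter `p ∈ (0,1)`, where `a = -1/log(1-p)`. -/
theorem s2_bounds_fixed_geometric (p : ℝ) (hp0 : 0 < p) (hp1 : p < 1) (r : ℕ) :
    2 * max 0 ((-1 / Real.log (1 - p)) * ((r : ℝ) + 1)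
        - ((r : ℝ) + 1) ^ (r + 1) * Real.exp (-((r : ℝ) + 1))
        - ((r : ℝ) + 2) ^ (r + 2) * Real.exp (-((r : ℝ) + 2)))
      ≤ liminf (fun n : ℕ => s2 (fixedGeomPMF p) r n) atTop ∧
    liminf (fun n : ℕ => s2 (fixedGeomPMF p) r n) atTop
      ≤ limsup (fun n : ℕ => s2 (fixedGeomPMF p) r n) atTop ∧
    limsup (fun n : ℕ => s2 (fixedGeomPMF p) r n) atTop
      ≤ 2 * (-1 / Real.log (1 - p)) * ((r : ℝ) + 1)
        + 2 * ((r : ℝ) + 1) ^ (r + 1) * Real.exp (-((r : ℝ) + 1))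
        + 2 * ((r : ℝ) + 2) ^ (r + 2) * Real.exp (-((r : ℝ) + 2)) := by
  classical
  have hq0 : (0:ℝ) < 1 - p := by linarith
  set L : ℝ := -Real.log (1 - p) with hLdef
  have hlog : Real.log (1 - p) < 0 := Real.log_neg hq0 (by linarith)
  have hL : 0 < L := by simp only [hLdef]; linarith
  have ha : -1 / Real.log (1 - p) = 1 / L := by
    rw [hLdef, div_neg, ← neg_div]
  have hM1 : S2Aux.Mb r = ((r:ℝ)+1)^(r+1) * Real.exp (-((r:ℝ)+1)) := rfl
  have hM2 : S2Aux.Mb (r+1) = ((r:ℝ)+2)^(r+2) * Real.exp (-((r:ℝ)+2)) := S2Aux.Mb_succ r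
  have hM1nn : 0 ≤ S2Aux.Mb r := S2Aux.Mb_nonneg r
  have hM2nn : 0 ≤ S2Aux.Mb (r+1) := S2Aux.Mb_nonneg (r+1)
  set c1 : ℝ := ((r:ℝ)+1)/(r.factorial:ℝ) with hc1def
  set c2 : ℝ := (1:ℝ)/(r.factorial:ℝ) with hc2def
  have hfac0 : (0:ℝ) < (r.factorial:ℝ) := by exact_mod_cast r.factorial_pos
  have hc1pos : 0 < c1 := by positivity
  have hc2pos : 0 < c2 := by positivity
  have hc1le : c1 ≤ 2 := by
    rw [hc1def, div_le_iff₀ hfac0]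
    linarith [S2Aux.two_fact r]
  have hfac1 : (1:ℝ) ≤ (r.factorial:ℝ) := by exact_mod_cast r.factorial_pos
  have hc2le : c2 ≤ 2 := by
    rw [hc2def, div_le_iff₀ hfac0]
    linarith
  have hkey1 : c1 * (r.factorial:ℝ) = (r:ℝ)+1 := by
    rw [hc1def]; field_simp
  have hkey2 : c2 * ((r+1).factorial:ℝ) = (r:ℝ)+1 := by
    rw [hc2def, Nat.factorial_succ]
    push_cast
    field_simp
  have hd1 : c1 * ((r.factorial:ℝ)/L) = ((r:ℝ)+1)/L := by
    rw [mul_div_assoc', hkey1]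
  have hd2 : c2 * (((r+1).factorial:ℝ)/L) = ((r:ℝ)+1)/L := by
    rw [mul_div_assoc', hkey2]
  have hm1 : c1 * S2Aux.Mb r ≤ 2 * S2Aux.Mb r := mul_le_mul_of_nonneg_right hc1le hM1nn
  have hm2 : c2 * S2Aux.Mb (r+1) ≤ 2 * S2Aux.Mb (r+1) := mul_le_mul_of_nonneg_right hc2le hM2nn
  set Bd : ℝ := 2*(1/L)*((r:ℝ)+1) + 2*S2Aux.Mb r + 2*S2Aux.Mb (r+1) with hBddef
  have hxt : Tendsto (fun n : ℕ => (n:ℝ) * p) atTop atTop :=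
    (tendsto_natCast_atTop_atTop).atTop_mul_const hp0
  have hev : ∀ᶠ n : ℕ in atTop, (r:ℝ) + 2 < (n:ℝ)*p := hxt.eventually_gt_atTop _
  have hx2' : ∀ {n : ℕ}, (r:ℝ)+2 < (n:ℝ)*p → ((r+1:ℕ):ℝ)+1 < (n:ℝ)*p := by
    intro n h; push_cast; linarith
  -- pointwise upper bound
  have hub : ∀ n : ℕ, (r:ℝ)+2 < (n:ℝ)*p → s2 (fixedGeomPMF p) r n ≤ Bd := by
    intro n hn
    have hx1 : (r:ℝ)+1 < (n:ℝ)*p := by linarith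
    rw [S2Aux.s2_decomp hp0 hp1 r n hx1 hn, ← hLdef]
    have h1 := S2Aux.gg_sum_upper (x := (n:ℝ)*p) (m := r) hL hx1
    have h2 := S2Aux.gg_sum_upper (x := (n:ℝ)*p) (m := r+1) hL (hx2' hn)
    have e1 := mul_le_mul_of_nonneg_left h1 hc1pos.le
    have e2 := mul_le_mul_of_nonneg_left h2 hc2pos.le
    calc c1 * (∑' j : ℕ, S2Aux.gg r L ((n:ℝ)*p) (j:ℝ))
          + c2 * (∑' j : ℕ, S2Aux.gg (r+1) L ((n:ℝ)*p) (j:ℝ))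
        ≤ c1 * ((r.factorial:ℝ)/L + S2Aux.Mb r)
          + c2 * (((r+1).factorial:ℝ)/L + S2Aux.Mb (r+1)) := add_le_add e1 e2
      _ = ((r:ℝ)+1)/L + ((r:ℝ)+1)/L + (c1 * S2Aux.Mb r + c2 * S2Aux.Mb (r+1)) := by
          rw [mul_add, mul_add, hd1, hd2]; ring
      _ ≤ Bd := by
          rw [hBddef]
          have h3 : 2*(1/L)*((r:ℝ)+1) = ((r:ℝ)+1)/L + ((r:ℝ)+1)/L := by ring
          linarith [hm1, hm2]
  have hub_ev : ∀ᶠ n : ℕ in atTop, s2 (fixedGeomPMF p) r n ≤ Bd :=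
    hev.mono (fun n hn => hub n hn)
  have hnn : ∀ n : ℕ, 0 ≤ s2 (fixedGeomPMF p) r n :=
    fun n => S2Aux.s2_nonneg hp0.le hp1.le r n
  have hBddBelow : IsBoundedUnder (· ≥ ·) atTop (fun n : ℕ => s2 (fixedGeomPMF p) r n) :=
    isBoundedUnder_of ⟨0, fun n => hnn n⟩
  have hBddAbove : IsBoundedUnder (· ≤ ·) atTop (fun n : ℕ => s2 (fixedGeomPMF p) r n) :=
    ⟨Bd, hub_ev⟩
  have h_limsup : limsup (fun n : ℕ => s2 (fixedGeomPMF p) r n) atTop ≤ Bd :=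
    limsup_le_of_le hBddBelow.isCoboundedUnder_le hub_ev
  -- liminf lower bound via tendsto of the integral lower approximation
  have hJ1 : Tendsto (fun n : ℕ => ∫ u in (0:ℝ)..((n:ℝ)*p), S2Aux.G r u) atTop
      (𝓝 (r.factorial:ℝ)) := by
    have h := MeasureTheory.intervalIntegral_tendsto_integral_Ioi 0
      (S2Aux.G_integrableOn r) hxt
    rwa [S2Aux.G_integral r] at h
  have hJ2 : Tendsto (fun n : ℕ => ∫ u in (0:ℝ)..((n:ℝ)*p), S2Aux.G (r+1) u) atTop
      (𝓝 ((r+1).factorial:ℝ)) := by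
    have h := MeasureTheory.intervalIntegral_tendsto_integral_Ioi 0
      (S2Aux.G_integrableOn (r+1)) hxt
    rwa [S2Aux.G_integral (r+1)] at h
  set A : ℕ → ℝ := fun n =>
    (1/L) * (c1 * (∫ u in (0:ℝ)..((n:ℝ)*p), S2Aux.G r u)
      + c2 * (∫ u in (0:ℝ)..((n:ℝ)*p), S2Aux.G (r+1) u))
      - c1 * S2Aux.Mb r - c2 * S2Aux.Mb (r+1) with hAdef
  have hA_tend : Tendsto A atTop
      (𝓝 ((1/L) * (c1 * (r.factorial:ℝ) + c2 * ((r+1).factorial:ℝ))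
        - c1 * S2Aux.Mb r - c2 * S2Aux.Mb (r+1))) := by
    apply Tendsto.sub_const
    apply Tendsto.sub_const
    exact (((hJ1.const_mul c1).add (hJ2.const_mul c2)).const_mul (1/L))
  have hA_le : ∀ᶠ n : ℕ in atTop, A n ≤ s2 (fixedGeomPMF p) r n := by
    filter_upwards [hev] with n hn
    have hx1 : (r:ℝ)+1 < (n:ℝ)*p := by linarith
    rw [S2Aux.s2_decomp hp0 hp1 r n hx1 hn, ← hLdef]
    have l1 := S2Aux.gg_sum_lower (x := (n:ℝ)*p) (m := r) hL hx1
    have l2 := S2Aux.gg_sum_lower (x := (n:ℝ)*p) (m := r+1) hL (hx2' hn)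
    have q1 := mul_le_mul_of_nonneg_left l1 hc1pos.le
    have q2 := mul_le_mul_of_nonneg_left l2 hc2pos.le
    have expand : A n = c1 * ((1/L) * (∫ u in (0:ℝ)..((n:ℝ)*p), S2Aux.G r u) - S2Aux.Mb r)
        + c2 * ((1/L) * (∫ u in (0:ℝ)..((n:ℝ)*p), S2Aux.G (r+1) u) - S2Aux.Mb (r+1)) := by
      simp only [hAdef]; ring
    rw [expand]
    exact add_le_add q1 q2
  have h_liminf_A : (1/L) * (c1 * (r.factorial:ℝ) + c2 * ((r+1).factorial:ℝ))
      - c1 * S2Aux.Mb r - c2 * S2Aux.Mb (r+1)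
      ≤ liminf (fun n : ℕ => s2 (fixedGeomPMF p) r n) atTop := by
    rw [← hA_tend.liminf_eq]
    exact liminf_le_liminf hA_le (hA_tend.isBoundedUnder_ge) hBddAbove.isCoboundedUnder_ge
  have h_liminf_0 : (0:ℝ) ≤ liminf (fun n : ℕ => s2 (fixedGeomPMF p) r n) atTop :=
    le_liminf_of_le hBddAbove.isCoboundedUnder_ge (Eventually.of_forall (fun n => hnn n))
  refine ⟨?_, liminf_le_limsup hBddAbove hBddBelow, ?_⟩
  · -- lower bound on liminf
    set X : ℝ := (-1 / Real.log (1 - p)) * ((r : ℝ) + 1)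
        - ((r : ℝ) + 1) ^ (r + 1) * Real.exp (-((r : ℝ) + 1))
        - ((r : ℝ) + 2) ^ (r + 2) * Real.exp (-((r : ℝ) + 2)) with hXdef
    rcases le_total X 0 with h | h
    · rw [max_eq_left h, mul_zero]
      exact h_liminf_0
    · rw [max_eq_right h]
      have h2X : 2 * X = 2*((r:ℝ)+1) * (1/L) - 2*S2Aux.Mb r - 2*S2Aux.Mb (r+1) := by
        rw [hXdef, ha, hM1, hM2]; ring
      have hC' : (1/L) * (c1 * (r.factorial:ℝ) + c2 * ((r+1).factorial:ℝ))
          - c1 * S2Aux.Mb r - c2 * S2Aux.Mb (r+1)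
          = 2*((r:ℝ)+1) * (1/L) - c1 * S2Aux.Mb r - c2 * S2Aux.Mb (r+1) := by
        rw [hkey1, hkey2]; ring
      calc 2 * X = 2*((r:ℝ)+1) * (1/L) - 2*S2Aux.Mb r - 2*S2Aux.Mb (r+1) := h2X
        _ ≤ 2*((r:ℝ)+1) * (1/L) - c1 * S2Aux.Mb r - c2 * S2Aux.Mb (r+1) := by
            linarith [hm1, hm2]
        _ = (1/L) * (c1 * (r.factorial:ℝ) + c2 * ((r+1).factorial:ℝ))
            - c1 * S2Aux.Mb r - c2 * S2Aux.Mb (r+1) := hC'.symm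
        _ ≤ _ := h_liminf_A
  · -- upper bound on limsup
    have hBd3 : Bd = 2 * (-1 / Real.log (1 - p)) * ((r : ℝ) + 1)
        + 2 * ((r : ℝ) + 1) ^ (r + 1) * Real.exp (-((r : ℝ) + 1))
        + 2 * ((r : ℝ) + 2) ^ (r + 2) * Real.exp (-((r : ℝ) + 2)) := by
      rw [hBddef, hM1, hM2, ha]; ring
    rw [← hBd3]
    exact h_limsup
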